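/- For every b > 0 there exists β₀ > 0 such that for all β with 0 < β ≤ β₀ and all integers i₀' > i₀ ≥ 1, there exist β' > 0 and n₀ such that the following holds for all n ≥ n₀. Given an n-vertex 3-graph H with δ₂(H) ≥ bn, if x, y ∈ V(H) are (β, i₀)-reachable in H, then x, y are (β', i₀')-reachable in H. -/

import Mathlib

/-- The degree of a vertex set `S` in the hypergraph with edge set `E`:
the number of edges containing `S`. -/
def degS {n : ℕ} (E : Finset (Finset (Fin n))) (S : Finset (Fin n)) : ℕ :=
  (E.filter (fun e => S ⊆ e)).card

/-- `s` spans a copy of `C₆³` (edges 123, 345, 561) in the 3-graph with edge set `E`. -/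
def IsC6Copy {n : ℕ} (E : Finset (Finset (Fin n))) (s : Finset (Fin n)) : Prop :=
  ∃ v : Fin 6 → Fin n, Function.Injective v ∧
    s = {v 0, v 1, v 2, v 3, v 4, v 5} ∧
    {v 0, v 1, v 2} ∈ E ∧ {v 2, v 3, v 4} ∈ E ∧ {v 4, v 5, v 0} ∈ E

/-- The set `W` can be perfectly tiled by vertex-disjoint copies of `C₆³`
(seen as a `C₆³`-factor of the subhypergraph induced on `W`). -/
def HasC6Factor {n : ℕ} (E : Finset (Finset (Fin n))) (W : Finset (Fin n)) : Prop :=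
  ∃ P : Finset (Finset (Fin n)), (∀ s ∈ P, IsC6Copy E s) ∧
    (∀ s ∈ P, ∀ t ∈ P, s ≠ t → Disjoint s t) ∧ P.biUnion id = W

/-- The number of reachable `m`-sets for `x` and `y`: sets `S ⊆ V ∖ {x,y}` of size `m`
such that both `H[{x} ∪ S]` and `H[{y} ∪ S]` contain `C₆³`-factors. -/
noncomputable def numReachSets {n : ℕ} (E : Finset (Finset (Fin n))) (x y : Fin n) (m : ℕ) : ℕ :=
  {S : Finset (Fin n) | S.card = m ∧ x ∉ S ∧ y ∉ S ∧
    HasC6Factor E (insert x S) ∧ HasC6Factor E (insert y S)}.ncard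

/-- `x` and `y` are `(β, i)`-reachable: there are at least `β·n^(6i-1)` reachable
`(6i-1)`-sets for `x` and `y`. -/
def IsReachable {n : ℕ} (β : ℝ) (i : ℕ) (E : Finset (Finset (Fin n))) (x y : Fin n) : Prop :=
  β * (n : ℝ) ^ (6 * i - 1) ≤ (numReachSets E x y (6 * i - 1) : ℝ)

/-- `Ñ_{β,i}(x)`: the set of vertices `(β, i)`-reachable to `x`. -/
def tildeN {n : ℕ} (β : ℝ) (i : ℕ) (E : Finset (Finset (Fin n))) (x : Fin n) : Set (Fin n) :=
  {y | y ≠ x ∧ IsReachable β i E x y}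

namespace ReachAux

open Finset

variable {n : ℕ}

/-! ### Generic counting lemmas -/

lemma mul_le_card_sigma {α β : Type*} (s : Finset α) (t : α → Finset β) (M : ℕ)
    (h : ∀ a ∈ s, M ≤ (t a).card) :
    s.card * M ≤ (s.sigma fun a => t a).card := by
  rw [Finset.card_sigma]
  calc s.card * M = ∑ _a ∈ s, M := by rw [Finset.sum_const, smul_eq_mul]
    _ ≤ ∑ a ∈ s, (t a).card := Finset.sum_le_sum h

/-! ### The reachable-set finset -/

open Classical in
noncomputable def reachFinset (E : Finset (Finset (Fin n))) (x y : Fin n) (m : ℕ) :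
    Finset (Finset (Fin n)) :=
  @Finset.filter _ (fun S => S.card = m ∧ x ∉ S ∧ y ∉ S ∧
    HasC6Factor E (insert x S) ∧ HasC6Factor E (insert y S)) (Classical.decPred _) Finset.univ

lemma mem_reachFinset {E : Finset (Finset (Fin n))} {x y : Fin n} {m : ℕ}
    {S : Finset (Fin n)} :
    S ∈ reachFinset E x y m ↔ S.card = m ∧ x ∉ S ∧ y ∉ S ∧
      HasC6Factor E (insert x S) ∧ HasC6Factor E (insert y S) := by
  simp only [reachFinset, Finset.mem_filter, Finset.mem_univ, true_and]

lemma numReachSets_eq (E : Finset (Finset (Fin n))) (x y : Fin n) (m : ℕ) :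
    numReachSets E x y m = (reachFinset E x y m).card := by
  rw [numReachSets, ← Set.ncard_coe_finset]
  congr 1
  ext S
  simp only [Set.mem_setOf_eq, Finset.coe_filter, reachFinset, Finset.mem_univ, true_and]

/-! ### Degree counting -/

lemma degS_le_third {E : Finset (Finset (Fin n))} (hE3 : ∀ e ∈ E, e.card = 3)
    {a c : Fin n} (hac : a ≠ c) :
    degS E {a, c} ≤ (Finset.univ.filter fun w => ({a, c, w} : Finset (Fin n)) ∈ E).card := by
  rw [degS]
  apply Finset.card_le_card_of_surjOn (fun w => ({a, c, w} : Finset (Fin n)))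
  intro e he
  simp only [Finset.coe_filter, Set.mem_setOf_eq] at he
  obtain ⟨heE, hsub⟩ := he
  have hcard := hE3 e heE
  have h2 : ({a, c} : Finset (Fin n)).card = 2 := by
    rw [Finset.card_insert_of_notMem (by simpa using hac), Finset.card_singleton]
  have hne : (e \ ({a, c} : Finset (Fin n))).Nonempty := by
    rw [← Finset.card_pos, Finset.card_sdiff_of_subset hsub, hcard, h2]
    norm_num
  obtain ⟨w, hw⟩ := hne
  rw [Finset.mem_sdiff] at hw
  have hwa : w ≠ a := fun h => hw.2 (by simp [h])
  have hwc : w ≠ c := fun h => hw.2 (by simp [h])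
  have hwsub : ({a, c, w} : Finset (Fin n)) ⊆ e := by
    intro z hz
    simp only [Finset.mem_insert, Finset.mem_singleton] at hz
    rcases hz with rfl | rfl | rfl
    · exact hsub (by simp)
    · exact hsub (by simp)
    · exact hw.1
  have hc3 : ({a, c, w} : Finset (Fin n)).card = 3 :=
    Finset.card_eq_three.mpr ⟨a, c, w, hac, Ne.symm hwa, Ne.symm hwc, rfl⟩
  have heq : ({a, c, w} : Finset (Fin n)) = e :=
    Finset.eq_of_subset_of_card_le hwsub (by rw [hcard, hc3])
  refine ⟨w, ?_, heq⟩
  simp only [Finset.coe_filter, Set.mem_setOf_eq, Finset.mem_univ, true_and]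
  rw [heq]; exact heE

/-! ### Extending a factor by a disjoint copy -/

lemma hasC6Factor_union {E : Finset (Finset (Fin n))} {W T : Finset (Fin n)}
    (hW : HasC6Factor E W) (hT : IsC6Copy E T) (hd : Disjoint W T) :
    HasC6Factor E (W ∪ T) := by
  classical
  obtain ⟨P, hP1, hP2, hP3⟩ := hW
  by_cases hTP : T ∈ P
  · refine ⟨P, hP1, hP2, ?_⟩
    have hsub : T ⊆ W := by rw [← hP3]; exact Finset.subset_biUnion_of_mem id hTP
    rw [hP3, Finset.union_eq_left.mpr hsub]
  · refine ⟨insert T P, ?_, ?_, ?_⟩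
    · intro s hs
      rcases Finset.mem_insert.mp hs with rfl | hs
      · exact hT
      · exact hP1 s hs
    · intro s hs t ht hst
      rcases Finset.mem_insert.mp hs with hsT | hsP
      · rcases Finset.mem_insert.mp ht with htT | htP
        · exact absurd (hsT.trans htT.symm) hst
        · have h : t ⊆ W := by rw [← hP3]; exact Finset.subset_biUnion_of_mem id htP
          rw [hsT]; exact (hd.mono_left h).symm
      · rcases Finset.mem_insert.mp ht with htT | htP
        · have h : s ⊆ W := by rw [← hP3]; exact Finset.subset_biUnion_of_mem id hsP
          rw [htT]; exact hd.mono_left h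
        · exact hP2 s hsP t htP hst
    · rw [Finset.biUnion_insert, hP3]
      exact Finset.union_comm T W

/-! ### The tuple finsets -/

abbrev T2 (n : ℕ) := (_ : Fin n) × Fin n
abbrev T3 (n : ℕ) := (_ : T2 n) × Fin n
abbrev T4 (n : ℕ) := (_ : T3 n) × Fin n
abbrev T5 (n : ℕ) := (_ : T4 n) × Fin n
abbrev T6 (n : ℕ) := (_ : T5 n) × Fin n

def tupS2 (F : Finset (Fin n)) : Finset (T2 n) :=
  (Finset.univ \ F).sigma fun a => Finset.univ \ insert a F

def tupS3 (E : Finset (Finset (Fin n))) (F : Finset (Fin n)) : Finset (T3 n) :=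
  (tupS2 F).sigma fun p =>
    (Finset.univ.filter fun w => ({p.1, p.2, w} : Finset (Fin n)) ∈ E) \ (F ∪ {p.1, p.2})

def tupS4 (E : Finset (Finset (Fin n))) (F : Finset (Fin n)) : Finset (T4 n) :=
  (tupS3 E F).sigma fun p => Finset.univ \ (F ∪ {p.1.1, p.1.2, p.2})

def tupS5 (E : Finset (Finset (Fin n))) (F : Finset (Fin n)) : Finset (T5 n) :=
  (tupS4 E F).sigma fun p =>
    (Finset.univ.filter fun w => ({p.1.2, p.2, w} : Finset (Fin n)) ∈ E) \
      (F ∪ {p.1.1.1, p.1.1.2, p.1.2, p.2})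

def tupFinset (E : Finset (Finset (Fin n))) (F : Finset (Fin n)) : Finset (T6 n) :=
  (tupS5 E F).sigma fun p =>
    (Finset.univ.filter fun w => ({p.2, p.1.1.1.1, w} : Finset (Fin n)) ∈ E) \
      (F ∪ {p.1.1.1.1, p.1.1.1.2, p.1.1.2, p.1.2, p.2})

lemma tup_spec {E : Finset (Finset (Fin n))} {F : Finset (Fin n)} {q : T6 n}
    (hq : q ∈ tupFinset E F) :
    (q.1.1.1.1.1 ∉ F ∧ q.1.1.1.1.2 ∉ F ∧ q.1.1.1.2 ∉ F ∧ q.1.1.2 ∉ F ∧ q.1.2 ∉ F ∧ q.2 ∉ F) ∧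
    (q.1.1.1.1.2 ≠ q.1.1.1.1.1 ∧
     q.1.1.1.2 ≠ q.1.1.1.1.1 ∧ q.1.1.1.2 ≠ q.1.1.1.1.2 ∧
     q.1.1.2 ≠ q.1.1.1.1.1 ∧ q.1.1.2 ≠ q.1.1.1.1.2 ∧ q.1.1.2 ≠ q.1.1.1.2 ∧
     q.1.2 ≠ q.1.1.1.1.1 ∧ q.1.2 ≠ q.1.1.1.1.2 ∧ q.1.2 ≠ q.1.1.1.2 ∧ q.1.2 ≠ q.1.1.2 ∧
     q.2 ≠ q.1.1.1.1.1 ∧ q.2 ≠ q.1.1.1.1.2 ∧ q.2 ≠ q.1.1.1.2 ∧ q.2 ≠ q.1.1.2 ∧ q.2 ≠ q.1.2) ∧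
    ({q.1.1.1.1.1, q.1.1.1.1.2, q.1.1.1.2} : Finset (Fin n)) ∈ E ∧
    ({q.1.1.1.2, q.1.1.2, q.1.2} : Finset (Fin n)) ∈ E ∧
    ({q.1.2, q.1.1.1.1.1, q.2} : Finset (Fin n)) ∈ E := by
  obtain ⟨⟨⟨⟨⟨a, b⟩, c⟩, d⟩, e⟩, g⟩ := q
  simp only [tupFinset, tupS5, tupS4, tupS3, tupS2, Finset.mem_sigma, Finset.mem_sdiff,
    Finset.mem_filter, Finset.mem_union, Finset.mem_insert, Finset.mem_singleton,
    Finset.mem_univ, true_and, not_or] at hq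
  tauto

lemma tup_card {E : Finset (Finset (Fin n))} {F : Finset (Fin n)} {M m : ℕ}
    (hF : F.card ≤ m + 2)
    (h1 : M + (m + 8) ≤ n)
    (h2 : ∀ a c : Fin n, a ≠ c →
      M + (m + 8) ≤ (Finset.univ.filter fun w => ({a, c, w} : Finset (Fin n)) ∈ E).card) :
    M ^ 6 ≤ (tupFinset E F).card := by
  classical
  have hcard : ∀ G : Finset (Fin n), G.card ≤ m + 7 → M ≤ (Finset.univ \ G).card := by
    intro G hG
    have h3 : (Finset.univ \ G).card = n - G.card := by
      rw [Finset.card_sdiff_of_subset (Finset.subset_univ G), Finset.card_univ, Fintype.card_fin]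
    omega
  have hcard2 : ∀ (a c : Fin n), a ≠ c → ∀ G : Finset (Fin n), G.card ≤ m + 7 →
      M ≤ ((Finset.univ.filter fun w => ({a, c, w} : Finset (Fin n)) ∈ E) \ G).card := by
    intro a c hac G hG
    have h3 := Finset.le_card_sdiff G (Finset.univ.filter fun w => ({a, c, w} : Finset (Fin n)) ∈ E)
    have h4 := h2 a c hac
    omega
  have hpair : ∀ u v : Fin n, ({u, v} : Finset (Fin n)).card ≤ 2 :=
    fun u v => (Finset.card_insert_le _ _).trans (by simp)
  have htriple : ∀ u v w : Fin n, ({u, v, w} : Finset (Fin n)).card ≤ 3 := by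
    intro u v w
    have := Finset.card_insert_le u ({v, w} : Finset (Fin n))
    have := hpair v w
    omega
  have hquad : ∀ u v w z : Fin n, ({u, v, w, z} : Finset (Fin n)).card ≤ 4 := by
    intro u v w z
    have := Finset.card_insert_le u ({v, w, z} : Finset (Fin n))
    have := htriple v w z
    omega
  have hquint : ∀ u v w z r : Fin n, ({u, v, w, z, r} : Finset (Fin n)).card ≤ 5 := by
    intro u v w z r
    have := Finset.card_insert_le u ({v, w, z, r} : Finset (Fin n))
    have := hquad v w z r
    omega
  have b1 : M ≤ (Finset.univ \ F).card := hcard F (by omega)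
  have b2 : (Finset.univ \ F).card * M ≤ (tupS2 (n := n) F).card := by
    refine mul_le_card_sigma _ _ _ ?_
    intro a _
    refine hcard _ ?_
    have := Finset.card_insert_le a F
    omega
  have b3 : (tupS2 (n := n) F).card * M ≤ (tupS3 E F).card := by
    refine mul_le_card_sigma _ _ _ ?_
    intro p hp
    have hp2 := (Finset.mem_sigma.mp hp).2
    simp only [Finset.mem_sdiff, Finset.mem_insert, Finset.mem_univ, true_and, not_or] at hp2
    refine hcard2 _ _ (Ne.symm hp2.1) _ ?_
    have := Finset.card_union_le F ({p.1, p.2} : Finset (Fin n))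
    have := hpair p.1 p.2
    omega
  have b4 : (tupS3 E F).card * M ≤ (tupS4 E F).card := by
    refine mul_le_card_sigma _ _ _ ?_
    intro p _
    refine hcard _ ?_
    have := Finset.card_union_le F ({p.1.1, p.1.2, p.2} : Finset (Fin n))
    have := htriple p.1.1 p.1.2 p.2
    omega
  have b5 : (tupS4 E F).card * M ≤ (tupS5 E F).card := by
    refine mul_le_card_sigma _ _ _ ?_
    intro p hp
    have hp2 := (Finset.mem_sigma.mp hp).2
    simp only [Finset.mem_sdiff, Finset.mem_union, Finset.mem_insert, Finset.mem_singleton,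
      Finset.mem_univ, true_and, not_or] at hp2
    refine hcard2 _ _ (Ne.symm hp2.2.2.2) _ ?_
    have := Finset.card_union_le F ({p.1.1.1, p.1.1.2, p.1.2, p.2} : Finset (Fin n))
    have := hquad p.1.1.1 p.1.1.2 p.1.2 p.2
    omega
  have b6 : (tupS5 E F).card * M ≤ (tupFinset E F).card := by
    refine mul_le_card_sigma _ _ _ ?_
    intro p hp
    have hp2 := (Finset.mem_sigma.mp hp).2
    simp only [Finset.mem_sdiff, Finset.mem_filter, Finset.mem_union, Finset.mem_insert,
      Finset.mem_singleton, Finset.mem_univ, true_and, not_or] at hp2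
    refine hcard2 _ _ ?_ _ ?_
    · exact hp2.2.2.1
    · have := Finset.card_union_le F ({p.1.1.1.1, p.1.1.1.2, p.1.1.2, p.1.2, p.2} : Finset (Fin n))
      have := hquint p.1.1.1.1 p.1.1.1.2 p.1.1.2 p.1.2 p.2
      omega
  have c2 : M * M ≤ (tupS2 (n := n) F).card := le_trans (Nat.mul_le_mul_right M b1) b2
  have c3 : M * M * M ≤ (tupS3 E F).card := le_trans (Nat.mul_le_mul_right M c2) b3
  have c4 : M * M * M * M ≤ (tupS4 E F).card := le_trans (Nat.mul_le_mul_right M c3) b4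
  have c5 : M * M * M * M * M ≤ (tupS5 E F).card := le_trans (Nat.mul_le_mul_right M c4) b5
  have c6 : M * M * M * M * M * M ≤ (tupFinset E F).card :=
    le_trans (Nat.mul_le_mul_right M c5) b6
  calc M ^ 6 = M * M * M * M * M * M := by ring
    _ ≤ (tupFinset E F).card := c6

def fmap {n : ℕ} : ((_ : Finset (Fin n)) × T6 n) → Finset (Fin n) :=
  fun q => q.1 ∪ {q.2.1.1.1.1.1, q.2.1.1.1.1.2, q.2.1.1.1.2, q.2.1.1.2, q.2.1.2, q.2.2}

set_option maxHeartbeats 1000000 in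
lemma step_count (E : Finset (Finset (Fin n))) (hE3 : ∀ e ∈ E, e.card = 3)
    (x y : Fin n) (m M : ℕ)
    (h1 : M + (m + 8) ≤ n)
    (h2 : ∀ a c : Fin n, a ≠ c →
      M + (m + 8) ≤ (Finset.univ.filter fun w => ({a, c, w} : Finset (Fin n)) ∈ E).card) :
    numReachSets E x y m * M ^ 6 ≤ (m + 6) ^ 6 * numReachSets E x y (m + 6) := by
  classical
  rw [numReachSets_eq, numReachSets_eq]
  have hA : ∀ q ∈ (reachFinset E x y m).sigma
      (fun S => tupFinset E (insert x (insert y S))),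
      fmap q ∈ reachFinset E x y (m + 6) := by
    rintro ⟨S, ⟨⟨⟨⟨⟨a, bb⟩, c⟩, d⟩, e⟩, g⟩⟩ hq
    rw [Finset.mem_sigma] at hq
    obtain ⟨hS, hw⟩ := hq
    obtain ⟨⟨haF, hbF, hcF, hdF, heF, hgF⟩,
      ⟨hba, hca, hcb, hda, hdb, hdc, hea, heb, hec, hed, hga, hgb, hgc, hgd, hge⟩,
      hE1, hE2, hE3'⟩ := tup_spec hw
    rw [mem_reachFinset] at hS
    obtain ⟨hSc, hSx, hSy, hFx, hFy⟩ := hS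
    have hsplit : ∀ z : Fin n, z ∉ insert x (insert y S) → z ≠ x ∧ z ≠ y ∧ z ∉ S := by
      intro z hz
      simp only [Finset.mem_insert, not_or] at hz
      exact hz
    have Ha := hsplit a haF
    have Hb := hsplit bb hbF
    have Hc := hsplit c hcF
    have Hd := hsplit d hdF
    have He := hsplit e heF
    have Hg := hsplit g hgF
    have hTcard : ({a, bb, c, d, e, g} : Finset (Fin n)).card = 6 := by
      rw [Finset.card_insert_of_notMem (by
          simp [Ne.symm hba, Ne.symm hca, Ne.symm hda, Ne.symm hea, Ne.symm hga]),
        Finset.card_insert_of_notMem (by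
          simp [Ne.symm hcb, Ne.symm hdb, Ne.symm heb, Ne.symm hgb]),
        Finset.card_insert_of_notMem (by simp [Ne.symm hdc, Ne.symm hec, Ne.symm hgc]),
        Finset.card_insert_of_notMem (by simp [Ne.symm hed, Ne.symm hgd]),
        Finset.card_insert_of_notMem (by simp [Ne.symm hge]),
        Finset.card_singleton]
    have hcopy : IsC6Copy E ({a, bb, c, d, e, g} : Finset (Fin n)) := by
      refine ⟨![a, bb, c, d, e, g], ?_, rfl, hE1, hE2, ?_⟩
      · intro i j hij
        fin_cases i <;> fin_cases j
        exacts [rfl, absurd hij (Ne.symm hba), absurd hij (Ne.symm hca),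
          absurd hij (Ne.symm hda), absurd hij (Ne.symm hea), absurd hij (Ne.symm hga),
          absurd hij hba, rfl, absurd hij (Ne.symm hcb), absurd hij (Ne.symm hdb),
          absurd hij (Ne.symm heb), absurd hij (Ne.symm hgb),
          absurd hij hca, absurd hij hcb, rfl, absurd hij (Ne.symm hdc),
          absurd hij (Ne.symm hec), absurd hij (Ne.symm hgc),
          absurd hij hda, absurd hij hdb, absurd hij hdc, rfl,
          absurd hij (Ne.symm hed), absurd hij (Ne.symm hgd),
          absurd hij hea, absurd hij heb, absurd hij hec, absurd hij hed, rfl,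
          absurd hij (Ne.symm hge),
          absurd hij hga, absurd hij hgb, absurd hij hgc, absurd hij hgd,
          absurd hij hge, rfl]
      · show ({e, g, a} : Finset (Fin n)) ∈ E
        rw [Finset.pair_comm g a]
        exact hE3'
    have hdTS : Disjoint S ({a, bb, c, d, e, g} : Finset (Fin n)) := by
      rw [Finset.disjoint_right]
      intro z hz
      simp only [Finset.mem_insert, Finset.mem_singleton] at hz
      rcases hz with rfl | rfl | rfl | rfl | rfl | rfl
      exacts [Ha.2.2, Hb.2.2, Hc.2.2, Hd.2.2, He.2.2, Hg.2.2]
    have hdx : Disjoint (insert x S) ({a, bb, c, d, e, g} : Finset (Fin n)) := by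
      rw [Finset.disjoint_right]
      intro z hz hz2
      rcases Finset.mem_insert.mp hz2 with h | h
      · simp only [Finset.mem_insert, Finset.mem_singleton] at hz
        rcases hz with rfl | rfl | rfl | rfl | rfl | rfl
        exacts [Ha.1 h, Hb.1 h, Hc.1 h, Hd.1 h, He.1 h, Hg.1 h]
      · exact (Finset.disjoint_right.mp hdTS hz) h
    have hdy : Disjoint (insert y S) ({a, bb, c, d, e, g} : Finset (Fin n)) := by
      rw [Finset.disjoint_right]
      intro z hz hz2
      rcases Finset.mem_insert.mp hz2 with h | h
      · simp only [Finset.mem_insert, Finset.mem_singleton] at hz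
        rcases hz with rfl | rfl | rfl | rfl | rfl | rfl
        exacts [Ha.2.1 h, Hb.2.1 h, Hc.2.1 h, Hd.2.1 h, He.2.1 h, Hg.2.1 h]
      · exact (Finset.disjoint_right.mp hdTS hz) h
    rw [mem_reachFinset]
    refine ⟨?_, ?_, ?_, ?_, ?_⟩
    · show (S ∪ {a, bb, c, d, e, g}).card = m + 6
      rw [Finset.card_union_of_disjoint hdTS, hSc, hTcard]
    · show x ∉ S ∪ ({a, bb, c, d, e, g} : Finset (Fin n))
      intro hmem
      rcases Finset.mem_union.mp hmem with h | h
      · exact hSx h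
      · exact (Finset.disjoint_right.mp hdx h) (Finset.mem_insert_self x S)
    · show y ∉ S ∪ ({a, bb, c, d, e, g} : Finset (Fin n))
      intro hmem
      rcases Finset.mem_union.mp hmem with h | h
      · exact hSy h
      · exact (Finset.disjoint_right.mp hdy h) (Finset.mem_insert_self y S)
    · show HasC6Factor E (insert x (S ∪ {a, bb, c, d, e, g}))
      rw [← Finset.insert_union]
      exact hasC6Factor_union hFx hcopy hdx
    · show HasC6Factor E (insert y (S ∪ {a, bb, c, d, e, g}))
      rw [← Finset.insert_union]
      exact hasC6Factor_union hFy hcopy hdy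
  have hfib : ∀ S' ∈ ((reachFinset E x y m).sigma
      (fun S => tupFinset E (insert x (insert y S)))).image fmap,
      (((reachFinset E x y m).sigma
        (fun S => tupFinset E (insert x (insert y S)))).filter
        fun q => fmap q = S').card ≤ (m + 6) ^ 6 := by
    intro S' hS'
    obtain ⟨q₀, hq₀, hfq₀⟩ := Finset.mem_image.mp hS'
    have hS'c : S'.card = m + 6 := by
      have h := hA q₀ hq₀
      rw [hfq₀, mem_reachFinset] at h
      exact h.1
    have hle := Finset.card_le_card_of_injOn
      (s := ((reachFinset E x y m).sigma
        (fun S => tupFinset E (insert x (insert y S)))).filter fun q => fmap q = S')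
      (t := Fintype.piFinset fun _ : Fin 6 => S')
      (fun q : ((_ : Finset (Fin n)) × T6 n) =>
        (![q.2.1.1.1.1.1, q.2.1.1.1.1.2, q.2.1.1.1.2, q.2.1.1.2, q.2.1.2, q.2.2] :
          Fin 6 → Fin n))
      ?_ ?_
    · calc _ ≤ (Fintype.piFinset fun _ : Fin 6 => S').card := hle
        _ = (m + 6) ^ 6 := by
          rw [Fintype.card_piFinset]
          simp [hS'c]
    · rintro ⟨S, ⟨⟨⟨⟨⟨a, bb⟩, c⟩, d⟩, e⟩, g⟩⟩ hq
      rw [Finset.mem_coe, Finset.mem_filter] at hq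
      obtain ⟨hqPr, hqf⟩ := hq
      have hTsub : ({a, bb, c, d, e, g} : Finset (Fin n)) ⊆ S' := by
        rw [← hqf]
        exact Finset.subset_union_right
      rw [Finset.mem_coe, Fintype.mem_piFinset]
      intro i
      fin_cases i
      exacts [hTsub (Finset.mem_insert_self _ _),
        hTsub (Finset.mem_insert_of_mem (Finset.mem_insert_self _ _)),
        hTsub (Finset.mem_insert_of_mem (Finset.mem_insert_of_mem
          (Finset.mem_insert_self _ _))),
        hTsub (Finset.mem_insert_of_mem (Finset.mem_insert_of_mem
          (Finset.mem_insert_of_mem (Finset.mem_insert_self _ _)))),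
        hTsub (Finset.mem_insert_of_mem (Finset.mem_insert_of_mem
          (Finset.mem_insert_of_mem (Finset.mem_insert_of_mem
            (Finset.mem_insert_self _ _))))),
        hTsub (Finset.mem_insert_of_mem (Finset.mem_insert_of_mem
          (Finset.mem_insert_of_mem (Finset.mem_insert_of_mem
            (Finset.mem_insert_of_mem (Finset.mem_singleton_self _))))))]
    · rintro ⟨S1, ⟨⟨⟨⟨⟨a1, b1⟩, c1⟩, d1⟩, e1⟩, g1⟩⟩ hq1
        ⟨S2, ⟨⟨⟨⟨⟨a2, b2⟩, c2⟩, d2⟩, e2⟩, g2⟩⟩ hq2 heq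
      rw [Finset.mem_coe, Finset.mem_filter] at hq1 hq2
      obtain ⟨hP1, hf1⟩ := hq1
      obtain ⟨hP2, hf2⟩ := hq2
      have ea : a1 = a2 := congrFun heq 0
      have eb : b1 = b2 := congrFun heq 1
      have ec : c1 = c2 := congrFun heq 2
      have ed : d1 = d2 := congrFun heq 3
      have ee : e1 = e2 := congrFun heq 4
      have eg : g1 = g2 := congrFun heq 5
      subst ea eb ec ed ee eg
      rw [Finset.mem_sigma] at hP1 hP2
      obtain ⟨⟨s1a, s1b, s1c, s1d, s1e, s1g⟩, -, -⟩ := tup_spec hP1.2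
      obtain ⟨⟨s2a, s2b, s2c, s2d, s2e, s2g⟩, -, -⟩ := tup_spec hP2.2
      have hnotS : ∀ (S0 : Finset (Fin n)),
          a1 ∉ insert x (insert y S0) → b1 ∉ insert x (insert y S0) →
          c1 ∉ insert x (insert y S0) → d1 ∉ insert x (insert y S0) →
          e1 ∉ insert x (insert y S0) → g1 ∉ insert x (insert y S0) →
          Disjoint S0 ({a1, b1, c1, d1, e1, g1} : Finset (Fin n)) := by
        intro S0 n1 n2 n3 n4 n5 n6
        rw [Finset.disjoint_right]
        intro z hz hz2
        have hmem : ∀ u : Fin n, u ∉ insert x (insert y S0) → u ∉ S0 := by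
          intro u hu hus
          exact hu (Finset.mem_insert_of_mem (Finset.mem_insert_of_mem hus))
        simp only [Finset.mem_insert, Finset.mem_singleton] at hz
        rcases hz with rfl | rfl | rfl | rfl | rfl | rfl
        exacts [hmem _ n1 hz2, hmem _ n2 hz2, hmem _ n3 hz2,
          hmem _ n4 hz2, hmem _ n5 hz2, hmem _ n6 hz2]
      have hd1 := hnotS S1 s1a s1b s1c s1d s1e s1g
      have hd2 := hnotS S2 s2a s2b s2c s2d s2e s2g
      have hSeq : S1 = S2 := by
        have hu : S1 ∪ ({a1, b1, c1, d1, e1, g1} : Finset (Fin n))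
            = S2 ∪ ({a1, b1, c1, d1, e1, g1} : Finset (Fin n)) := by
          have g1' : fmap (⟨S1, ⟨⟨⟨⟨⟨a1, b1⟩, c1⟩, d1⟩, e1⟩, g1⟩⟩ :
            (_ : Finset (Fin n)) × T6 n) = S' := hf1
          have g2' : fmap (⟨S2, ⟨⟨⟨⟨⟨a1, b1⟩, c1⟩, d1⟩, e1⟩, g1⟩⟩ :
            (_ : Finset (Fin n)) × T6 n) = S' := hf2
          rw [fmap] at g1' g2'
          exact g1'.trans g2'.symm
        calc S1 = (S1 ∪ ({a1, b1, c1, d1, e1, g1} : Finset (Fin n)))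
              \ ({a1, b1, c1, d1, e1, g1} : Finset (Fin n)) :=
              (Finset.union_sdiff_cancel_right hd1).symm
          _ = (S2 ∪ ({a1, b1, c1, d1, e1, g1} : Finset (Fin n)))
              \ ({a1, b1, c1, d1, e1, g1} : Finset (Fin n)) := by rw [hu]
          _ = S2 := Finset.union_sdiff_cancel_right hd2
      subst hSeq
      rfl
  have step1 : (reachFinset E x y m).card * M ^ 6 ≤
      ((reachFinset E x y m).sigma (fun S => tupFinset E (insert x (insert y S)))).card := by
    refine mul_le_card_sigma _ _ _ ?_
    intro S hS
    rw [mem_reachFinset] at hS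
    refine tup_card ?_ h1 h2
    have i1 := Finset.card_insert_le x (insert y S)
    have i2 := Finset.card_insert_le y S
    have := hS.1
    omega
  have step2 := Finset.card_le_mul_card_image
    ((reachFinset E x y m).sigma (fun S => tupFinset E (insert x (insert y S))))
    ((m + 6) ^ 6) hfib
  have step3 : (((reachFinset E x y m).sigma
      (fun S => tupFinset E (insert x (insert y S)))).image fmap).card
      ≤ (reachFinset E x y (m + 6)).card := by
    apply Finset.card_le_card
    rw [Finset.image_subset_iff]
    exact hA
  calc (reachFinset E x y m).card * M ^ 6
      ≤ ((reachFinset E x y m).sigma (fun S => tupFinset E (insert x (insert y S)))).card :=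
        step1
    _ ≤ (m + 6) ^ 6 * (((reachFinset E x y m).sigma
        (fun S => tupFinset E (insert x (insert y S)))).image fmap).card := step2
    _ ≤ (m + 6) ^ 6 * (reachFinset E x y (m + 6)).card := Nat.mul_le_mul_left _ step3

end ReachAux

/-- Corollary: for every `b > 0` there is `β₀ > 0` such that for all
`0 < β ≤ β₀` and integers `i₀' > i₀ ≥ 1` there are `β' > 0` and `n₀` so that in every
`n`-vertex 3-graph (`n ≥ n₀`) with `δ₂(H) ≥ bn`, `(β, i₀)`-reachable vertices are
`(β', i₀')`-reachable. -/
theorem reachability_corollary (b : ℝ) (hb : 0 < b) :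
    ∃ β₀ : ℝ, 0 < β₀ ∧ ∀ β : ℝ, 0 < β → β ≤ β₀ →
      ∀ i₀ i₀' : ℕ, 1 ≤ i₀ → i₀ < i₀' →
        ∃ β' : ℝ, 0 < β' ∧ ∃ n₀ : ℕ, ∀ n : ℕ, n₀ ≤ n →
          ∀ E : Finset (Finset (Fin n)), (∀ e ∈ E, e.card = 3) →
          (∀ S : Finset (Fin n), S.card = 2 → b * n ≤ (degS E S : ℝ)) →
          ∀ x y : Fin n, IsReachable β i₀ E x y → IsReachable β' i₀' E x y := by
  classical
  refine ⟨1, one_pos, ?_⟩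
  intro β hβ _hβ1 i₀ i₀' hi₀ hii
  have hmin : (0:ℝ) < min b 1 := lt_min hb one_pos
  obtain ⟨K, hK2, hKb⟩ : ∃ K : ℕ, 2 ≤ K ∧ 2 / min b 1 ≤ (K : ℝ) := by
    refine ⟨max 2 ⌈2 / min b 1⌉₊, le_max_left _ _, ?_⟩
    calc (2 / min b 1 : ℝ) ≤ (⌈2 / min b 1⌉₊ : ℝ) := Nat.le_ceil _
      _ ≤ ((max 2 ⌈2 / min b 1⌉₊ : ℕ) : ℝ) := by
          exact_mod_cast Nat.cast_le.mpr (le_max_right _ _)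
  have hK0 : (0:ℝ) < (K : ℝ) := by
    have : (0:ℕ) < K := by omega
    exact_mod_cast this
  have hKdiv : (1:ℝ) / (K:ℝ) ≤ min b 1 / 2 := by
    rw [div_le_div_iff₀ hK0 (by norm_num : (0:ℝ) < 2)]
    have h2K : 2 ≤ (K:ℝ) * min b 1 := by
      have := (div_le_iff₀ hmin).mp hKb
      linarith
    linarith
  suffices H : ∀ j : ℕ, ∃ β' : ℝ, 0 < β' ∧ ∃ n₀ : ℕ, ∀ nn : ℕ, n₀ ≤ nn →
      ∀ E : Finset (Finset (Fin nn)), (∀ e ∈ E, e.card = 3) →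
      (∀ S : Finset (Fin nn), S.card = 2 → b * nn ≤ (degS E S : ℝ)) →
      ∀ x y : Fin nn, IsReachable β i₀ E x y → IsReachable β' (i₀ + j) E x y by
    obtain ⟨β', hβ', n₀, hmain⟩ := H (i₀' - i₀)
    refine ⟨β', hβ', n₀, ?_⟩
    have heq : i₀ + (i₀' - i₀) = i₀' := by omega
    rw [heq] at hmain
    exact hmain
  intro j
  induction j with
  | zero => exact ⟨β, hβ, 0, fun nn _ E _ _ x y h => h⟩
  | succ j ih =>
    obtain ⟨βj, hβj, n₀j, Hj⟩ := ih
    set m : ℕ := 6 * (i₀ + j) - 1 with hm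
    refine ⟨βj / ((2 * (K:ℝ)) ^ 6 * ((m:ℝ) + 6) ^ 6), by positivity, ?_⟩
    refine ⟨max (max n₀j (2 * K + 2 * (m + 8) + 1)) (⌈(2 * ((m:ℝ) + 8)) / b⌉₊ + 1), ?_⟩
    intro nn hnn E hE3 hdeg x y hxy
    have hn1 : n₀j ≤ nn := le_trans (le_trans (le_max_left _ _) (le_max_left _ _)) hnn
    have hn2 : 2 * K + 2 * (m + 8) + 1 ≤ nn :=
      le_trans (le_trans (le_max_right _ _) (le_max_left _ _)) hnn
    have hn3 : ⌈(2 * ((m:ℝ) + 8)) / b⌉₊ + 1 ≤ nn := le_trans (le_max_right _ _) hnn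
    have hnpos : 0 < nn := by omega
    have hnR : (0:ℝ) < (nn:ℝ) := by exact_mod_cast hnpos
    have hreach : IsReachable βj (i₀ + j) E x y := Hj nn hn1 E hE3 hdeg x y hxy
    set M : ℕ := nn / K with hM
    have hMle2 : M ≤ nn / 2 := Nat.div_le_div_left hK2 (by norm_num)
    have h1 : M + (m + 8) ≤ nn := by omega
    have hMreal_up : (M:ℝ) ≤ min b 1 / 2 * (nn:ℝ) := by
      calc (M:ℝ) ≤ (nn:ℝ) / (K:ℝ) := by rw [hM]; exact Nat.cast_div_le
        _ = 1 / (K:ℝ) * (nn:ℝ) := by ring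
        _ ≤ min b 1 / 2 * (nn:ℝ) := mul_le_mul_of_nonneg_right hKdiv (le_of_lt hnR)
    have hceil : (2 * ((m:ℝ) + 8)) / b ≤ (nn:ℝ) := by
      calc (2 * ((m:ℝ) + 8)) / b ≤ (⌈(2 * ((m:ℝ) + 8)) / b⌉₊ : ℝ) := Nat.le_ceil _
        _ ≤ (nn:ℝ) := by exact_mod_cast Nat.cast_le.mpr (by omega : ⌈(2 * ((m:ℝ) + 8)) / b⌉₊ ≤ nn)
    have hm8 : 2 * ((m:ℝ) + 8) ≤ b * (nn:ℝ) := by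
      rw [div_le_iff₀ hb] at hceil
      linarith
    have hminb : min b 1 ≤ b := min_le_left _ _
    have h2 : ∀ a c : Fin nn, a ≠ c →
        M + (m + 8) ≤ (Finset.univ.filter fun w => ({a, c, w} : Finset (Fin nn)) ∈ E).card := by
      intro a c hac
      have hdeg2 : b * (nn:ℝ) ≤ (degS E {a, c} : ℝ) := by
        apply hdeg
        rw [Finset.card_insert_of_notMem (by simpa using hac), Finset.card_singleton]
      have hd3 : (degS E {a, c} : ℝ) ≤
          (((Finset.univ.filter fun w => ({a, c, w} : Finset (Fin nn)) ∈ E).card : ℕ) : ℝ) := by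
        exact_mod_cast ReachAux.degS_le_third hE3 hac
      have hMb : ((M + (m + 8) : ℕ) : ℝ) ≤ b * (nn:ℝ) := by
        push_cast
        have hb2 : min b 1 / 2 * (nn:ℝ) ≤ b / 2 * (nn:ℝ) := by
          apply mul_le_mul_of_nonneg_right _ (le_of_lt hnR)
          linarith
        linarith
      exact_mod_cast hMb.trans (hdeg2.trans hd3)
    have key := ReachAux.step_count E hE3 x y m M h1 h2
    have hMlow : (nn:ℝ) / (2 * (K:ℝ)) ≤ (M:ℝ) := by
      have hmod := Nat.div_add_mod nn K
      have hmodlt : nn % K < K := Nat.mod_lt _ (by omega)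
      have hcast : (nn:ℝ) = (K:ℝ) * (M:ℝ) + ((nn % K : ℕ) : ℝ) := by
        rw [hM]; exact_mod_cast hmod.symm
      have hcast2 : ((nn % K : ℕ) : ℝ) < (K:ℝ) := by exact_mod_cast hmodlt
      have hKM : (nn:ℝ) - (K:ℝ) ≤ (K:ℝ) * (M:ℝ) := by linarith
      have hnn2K : 2 * (K:ℝ) ≤ (nn:ℝ) := by exact_mod_cast Nat.cast_le.mpr (by omega : 2 * K ≤ nn)
      rw [div_le_iff₀ (by positivity : (0:ℝ) < 2 * (K:ℝ))]
      nlinarith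
    have hnum1 : βj * (nn:ℝ) ^ m ≤ ((numReachSets E x y m : ℕ) : ℝ) := by
      rw [hm]
      exact hreach
    have hM6 : ((nn:ℝ) / (2 * (K:ℝ))) ^ 6 ≤ (M:ℝ) ^ 6 :=
      pow_le_pow_left₀ (by positivity) hMlow 6
    have hkey : ((numReachSets E x y m : ℕ) : ℝ) * (M:ℝ) ^ 6 ≤
        ((m:ℝ) + 6) ^ 6 * ((numReachSets E x y (m + 6) : ℕ) : ℝ) := by
      exact_mod_cast key
    have hprod : βj * (nn:ℝ) ^ m * ((nn:ℝ) / (2 * (K:ℝ))) ^ 6 ≤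
        ((numReachSets E x y m : ℕ) : ℝ) * (M:ℝ) ^ 6 :=
      mul_le_mul hnum1 hM6 (by positivity) (Nat.cast_nonneg _)
    have h3 := le_trans hprod hkey
    have hm6pos : (0:ℝ) < ((m:ℝ) + 6) ^ 6 := by positivity
    have h4 : βj * (nn:ℝ) ^ m * ((nn:ℝ) / (2 * (K:ℝ))) ^ 6 / ((m:ℝ) + 6) ^ 6 ≤
        ((numReachSets E x y (m + 6) : ℕ) : ℝ) := by
      rw [div_le_iff₀ hm6pos]
      linarith
    have hexp : 6 * (i₀ + (j + 1)) - 1 = m + 6 := by rw [hm]; omega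
    show βj / ((2 * (K:ℝ)) ^ 6 * ((m:ℝ) + 6) ^ 6) *
        (nn:ℝ) ^ (6 * (i₀ + (j + 1)) - 1) ≤
        ((numReachSets E x y (6 * (i₀ + (j + 1)) - 1) : ℕ) : ℝ)
    rw [hexp]
    have hK6 : ((2 * (K:ℝ)) ^ 6) ≠ 0 := by positivity
    have hm6 : (((m:ℝ) + 6) ^ 6) ≠ 0 := ne_of_gt hm6pos
    calc βj / ((2 * (K:ℝ)) ^ 6 * ((m:ℝ) + 6) ^ 6) * (nn:ℝ) ^ (m + 6)
        = βj * (nn:ℝ) ^ m * ((nn:ℝ) / (2 * (K:ℝ))) ^ 6 / ((m:ℝ) + 6) ^ 6 := by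
          rw [pow_add]
          field_simp
      _ ≤ ((numReachSets E x y (m + 6) : ℕ) : ℝ) := h4
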